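/- Let u and k be nonnegative integers with 1+k+u ≥ 3 and let w ≥ 3 be an integer. Suppose there exists a (1,2)-DTA(N; 1+k+u, (2^u 3^k w^1)), i.e., a (1,2)-detecting array on u two-level factors, k three-level factors and one w-level factor, whose size N meets the lower bound (so N = 6w if k ≥ 1 and N = 4w if k = 0 and u ≥ 1). Then either u < 2 or k < 2. Moreover: if k = 0 then u ≤ 3; if k = 1 then u ≤ 4; if u = 0 then k ≤ 5; and if u = 1 then k ≤ 3. -/

import Mathlib

/-- An array `A` (rows indexed by `R`, columns by `J`) is of type `v` if every
entry in column `j` lies in `Z_{v j} = {0, 1, …, v j - 1}`. -/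
def IsArray {R J : Type*} (v : J → ℕ) (A : R → J → ℕ) : Prop :=
  ∀ r j, A r j < v j

/-- An `s`-way interaction: a set of `s` pairs `(j, σ)` with pairwise distinct
column indices `j` and value `σ ∈ Z_{v j}`. -/
def IsInteraction {J : Type*} [DecidableEq J] (v : J → ℕ) (s : ℕ)
    (T : Finset (J × ℕ)) : Prop :=
  T.card = s ∧ (T.image Prod.fst).card = s ∧ ∀ p ∈ T, p.2 < v p.1

/-- `rho A T`: the set of rows of `A` in which the interaction `T` is covered. -/
def rho {R J : Type*} [Fintype R] (A : R → J → ℕ) (T : Finset (J × ℕ)) :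
    Finset R :=
  Finset.univ.filter fun r => ∀ p ∈ T, A r p.1 = p.2

/-- `rhoSet A 𝒯 = ⋃_{T ∈ 𝒯} rho A T`. -/
def rhoSet {R J : Type*} [Fintype R] [DecidableEq R] (A : R → J → ℕ)
    (Ts : Finset (Finset (J × ℕ))) : Finset R :=
  Ts.sup (rho A)

/-- A `(d,t)`-detecting array of type `v`: for every `t`-way interaction `T` and
every set `𝒯` of exactly `d` `t`-way interactions,
`ρ(A,T) ⊆ ρ(A,𝒯) ↔ T ∈ 𝒯`. -/
def IsDTA {R J : Type*} [Fintype R] [DecidableEq R] [DecidableEq J] (v : J → ℕ) (d t : ℕ)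
    (A : R → J → ℕ) : Prop :=
  IsArray v A ∧
    ∀ T : Finset (J × ℕ), IsInteraction v t T →
      ∀ Ts : Finset (Finset (J × ℕ)), Ts.card = d →
        (∀ T' ∈ Ts, IsInteraction v t T') →
          (rho A T ⊆ rhoSet A Ts ↔ T ∈ Ts)

/-- A mixed covering array `MCA_λ(N; t, k, v)`: an array of type `v` such that
`|ρ(A,T)| ≥ λ` for every `t`-way interaction `T`. -/
def IsMCA {R J : Type*} [Fintype R] [DecidableEq J] (v : J → ℕ) (lam t : ℕ)
    (A : R → J → ℕ) : Prop :=
  IsArray v A ∧ ∀ T : Finset (J × ℕ), IsInteraction v t T → lam ≤ (rho A T).card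

/-- Super-simple of strength `t`: every `(t+1)`-way interaction is covered by at
most one row. -/
def IsSuperSimple {R J : Type*} [Fintype R] [DecidableEq J] (v : J → ℕ) (t : ℕ)
    (A : R → J → ℕ) : Prop :=
  ∀ T : Finset (J × ℕ), IsInteraction v (t + 1) T → (rho A T).card ≤ 1

/-- An orthogonal array `OA_λ(t, k, v)`: all entries in `Z_v` and
`|ρ(A,T)| = λ` for every `t`-way interaction `T`. (The size requirement
`N = λ·v^t` is imposed on the row-index type in the statements.) -/
def IsOA {R J : Type*} [Fintype R] [DecidableEq J] (vlev lam t : ℕ)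
    (A : R → J → ℕ) : Prop :=
  IsArray (fun _ : J => vlev) A ∧
    ∀ T : Finset (J × ℕ), IsInteraction (fun _ : J => vlev) t T →
      (rho A T).card = lam

/-- `Te` is an extension of the interaction `T`: it is obtained from `T` by
adjoining one pair `(j, σ)` with `σ ∈ Z_{v j}` whose column index `j` occurs in
no pair of `T`. -/
def IsExtension {J : Type*} [DecidableEq J] (v : J → ℕ)
    (T Te : Finset (J × ℕ)) : Prop :=
  ∃ p : J × ℕ, p.2 < v p.1 ∧ (∀ q ∈ T, q.1 ≠ p.1) ∧ Te = insert p T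

/-- `A` is `d`-extendible (with respect to strength `t`): for every `t`-way
interaction `T` and every list of `d` extensions `T_1, …, T_d` of `T`
(repetitions allowed), `ρ(A,T) \ (ρ(A,T_1) ∪ ⋯ ∪ ρ(A,T_d))` is nonempty. -/
def IsExtendible {R J : Type*} [Fintype R] [DecidableEq J] (v : J → ℕ)
    (d t : ℕ) (A : R → J → ℕ) : Prop :=
  ∀ T : Finset (J × ℕ), IsInteraction v t T →
    ∀ Te : Fin d → Finset (J × ℕ), (∀ i, IsExtension v T (Te i)) →
      ∃ r ∈ rho A T, ∀ i, r ∉ rho A (Te i)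

namespace Stmt11Aux
open Finset

variable {N n : ℕ}

def pr (j1 : Fin n) (a : ℕ) (j2 : Fin n) (b : ℕ) : Finset (Fin n × ℕ) := {(j1, a), (j2, b)}

variable {v : Fin n → ℕ} {A : Fin N → Fin n → ℕ}

lemma mem_rho_pair {j1 j2 : Fin n} {a b : ℕ} {r : Fin N} :
    r ∈ rho A (pr j1 a j2 b) ↔ A r j1 = a ∧ A r j2 = b := by
  simp [rho, pr]

lemma pr_interaction {j1 j2 : Fin n} {a b : ℕ} (hj : j1 ≠ j2) (ha : a < v j1) (hb : b < v j2) :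
    IsInteraction v 2 (pr j1 a j2 b) := by
  have hne : ((j1, a) : Fin n × ℕ) ≠ (j2, b) := by
    simp only [Ne, Prod.mk.injEq, not_and]
    intro h; exact absurd h hj
  refine ⟨?_, ?_, ?_⟩
  · rw [pr, card_insert_of_notMem (by simpa using hne), card_singleton]
  · rw [pr, image_insert, image_singleton]
    rw [card_insert_of_notMem (by simpa using hj), card_singleton]
  · intro p hp
    rcases mem_insert.1 hp with h | h
    · subst h; exact ha
    · rw [mem_singleton.1 h]; exact hb

lemma det_imp (hA : IsDTA v 1 2 A) {T T' : Finset (Fin n × ℕ)} (hT : IsInteraction v 2 T)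
    (hT' : IsInteraction v 2 T') (hsub : rho A T ⊆ rho A T') : T = T' := by
  have h := hA.2 T hT {T'} (card_singleton _) (by simpa using hT')
  rw [rhoSet, sup_singleton] at h
  exact mem_singleton.1 (h.1 hsub)

lemma no_sub (hA : IsDTA v 1 2 A) {j1 j2 j3 j4 : Fin n} {a b c d : ℕ}
    (h12 : j1 ≠ j2) (h34 : j3 ≠ j4) (ha : a < v j1) (hb : b < v j2) (hc : c < v j3)
    (hd : d < v j4) (hne : pr j1 a j2 b ≠ pr j3 c j4 d) :
    ¬ rho A (pr j1 a j2 b) ⊆ rho A (pr j3 c j4 d) :=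
  fun hsub => hne (det_imp hA (pr_interaction h12 ha hb) (pr_interaction h34 hc hd) hsub)

lemma two_le (hA : IsDTA v 1 2 A) (hn : 3 ≤ n) (hv : ∀ j, 2 ≤ v j) {j1 j2 : Fin n} {a b : ℕ}
    (hj : j1 ≠ j2) (ha : a < v j1) (hb : b < v j2) : 2 ≤ (rho A (pr j1 a j2 b)).card := by
  by_contra hcon
  push_neg at hcon
  have hc : (rho A (pr j1 a j2 b)).card = 0 ∨ (rho A (pr j1 a j2 b)).card = 1 := by omega
  rcases hc with hc | hc
  · rw [card_eq_zero] at hc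
    set a' : ℕ := if a = 0 then 1 else 0 with ha'def
    have ha' : a' < v j1 := by have := hv j1; rw [ha'def]; split <;> omega
    have haa : a ≠ a' := by rw [ha'def]; split <;> omega
    refine no_sub hA hj hj ha hb ha' hb ?_ (by rw [hc]; exact empty_subset _)
    intro heq
    have : ((j1, a) : Fin n × ℕ) ∈ pr j1 a' j2 b := heq ▸ mem_insert_self _ _
    rcases mem_insert.1 this with h | h
    · exact haa (congrArg Prod.snd h)
    · exact hj (congrArg Prod.fst (mem_singleton.1 h))
  · rw [card_eq_one] at hc
    obtain ⟨r, hr⟩ := hc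
    have hr' : r ∈ rho A (pr j1 a j2 b) := hr ▸ mem_singleton_self r
    obtain ⟨h1, h2⟩ := mem_rho_pair.1 hr'
    have hj3 : ∃ j3 : Fin n, j3 ≠ j1 ∧ j3 ≠ j2 := by
      by_contra hcon2
      push_neg at hcon2
      have hsub : (univ : Finset (Fin n)) ⊆ {j1, j2} := by
        intro x _
        by_cases hx1 : x = j1
        · exact mem_insert.2 (Or.inl hx1)
        · exact mem_insert.2 (Or.inr (mem_singleton.2 (hcon2 x hx1)))
      have := card_le_card hsub
      simp only [card_univ, Fintype.card_fin] at this
      have : n ≤ 2 := this.trans (card_insert_le _ _ |>.trans (by simp))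
      omega
    obtain ⟨j3, hj31, hj32⟩ := hj3
    refine no_sub hA hj (fun h => hj31 h.symm) ha hb ha (hA.1 r j3) ?_ ?_
    · intro heq
      have : ((j2, b) : Fin n × ℕ) ∈ pr j1 a j3 (A r j3) := by
        rw [← heq]; exact mem_insert.2 (Or.inr (mem_singleton_self _))
      rcases mem_insert.1 this with h | h
      · exact hj (congrArg Prod.fst h).symm
      · exact hj32 (congrArg Prod.fst (mem_singleton.1 h)).symm
    · rw [hr]
      exact singleton_subset_iff.2 (mem_rho_pair.2 ⟨h1, rfl⟩)

lemma all_eq_two {α : Type*} {s : Finset α} {f : α → ℕ} (h2 : ∀ x ∈ s, 2 ≤ f x)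
    (hs : ∑ x ∈ s, f x = 2 * s.card) : ∀ x ∈ s, f x = 2 := by
  by_contra hcon
  push_neg at hcon
  obtain ⟨x, hx, hne⟩ := hcon
  have hlt : ∑ _y ∈ s, (2 : ℕ) < ∑ y ∈ s, f y :=
    Finset.sum_lt_sum h2 ⟨x, hx, lt_of_le_of_ne (h2 x hx) (Ne.symm hne)⟩
  rw [Finset.sum_const, smul_eq_mul] at hlt
  omega

lemma cov_exact (hA : IsDTA v 1 2 A) (hn : 3 ≤ n) (hv : ∀ j, 2 ≤ v j) {j jw : Fin n}
    (hj : j ≠ jw) (hN : N = 2 * (v j * v jw)) {a c : ℕ} (ha : a < v j) (hc : c < v jw) :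
    (rho A (pr j a jw c)).card = 2 := by
  have hfib := Finset.card_eq_sum_card_fiberwise (s := (univ : Finset (Fin N)))
    (t := range (v j) ×ˢ range (v jw)) (f := fun r => (A r j, A r jw))
    (fun r _ => by exact Finset.mem_product.2 ⟨mem_range.2 (hA.1 r j), mem_range.2 (hA.1 r jw)⟩)
  have hfilter : ∀ p ∈ range (v j) ×ˢ range (v jw),
      ((univ : Finset (Fin N)).filter fun r => (A r j, A r jw) = p).card
        = (rho A (pr j p.1 jw p.2)).card := by
    intro p _
    congr 1
    ext r
    simp [mem_rho_pair, Prod.ext_iff]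
  rw [Finset.sum_congr rfl hfilter] at hfib
  have hsum : ∑ p ∈ range (v j) ×ˢ range (v jw), (rho A (pr j p.1 jw p.2)).card
      = 2 * (range (v j) ×ˢ range (v jw)).card := by
    rw [← hfib, card_univ, Fintype.card_fin, card_product, card_range, card_range, hN]
  have := all_eq_two (fun p hp => by
      obtain ⟨hp1, hp2⟩ := Finset.mem_product.1 hp
      exact two_le hA hn hv hj (mem_range.1 hp1) (mem_range.1 hp2)) hsum
  exact this (a, c) (Finset.mem_product.2 ⟨mem_range.2 ha, mem_range.2 hc⟩)

lemma classes_le {R : Type*} [DecidableEq R] {α : Type*} [Fintype α] [DecidableEq α]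
    (ψ : α → Finset R) (T : Finset (Finset R)) (hmem : ∀ i, ψ i ∈ T)
    (hinj : Function.Injective ψ) : Fintype.card α ≤ T.card := by
  have := Finset.card_le_card_of_injOn (s := (univ : Finset α)) ψ (fun i _ => hmem i)
    (hinj.injOn)
  simpa using this

end Stmt11Aux
set_option maxHeartbeats 1000000 in
open Finset Stmt11Aux in
theorem stmt_11 {u k w : ℕ} (hw : 3 ≤ w) (hku : 3 ≤ 1 + k + u)
    (h : ∃ A : Fin (if 1 ≤ k then 6 * w else 4 * w) → Fin (u + k + 1) → ℕ,
      IsDTA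
        (fun j : Fin (u + k + 1) =>
          if (j : ℕ) < u then 2 else if (j : ℕ) < u + k then 3 else w)
        1 2 A) :
    (u < 2 ∨ k < 2) ∧ (k = 0 → u ≤ 3) ∧ (k = 1 → u ≤ 4) ∧
      (u = 0 → k ≤ 5) ∧ (u = 1 → k ≤ 3) := by
  obtain ⟨A, hA⟩ := h
  set v : Fin (u + k + 1) → ℕ :=
    fun j => if (j : ℕ) < u then 2 else if (j : ℕ) < u + k then 3 else w with hvdef
  have hn3 : 3 ≤ u + k + 1 := by omega
  have hv2 : ∀ j, 2 ≤ v j := by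
    intro j; rw [hvdef]; dsimp only; split_ifs <;> omega
  set wcol : Fin (u + k + 1) := ⟨u + k, by omega⟩ with hwcol
  have hvw : v wcol = w := by
    rw [hvdef]; dsimp only [hwcol]; rw [if_neg (by show ¬ (u + k < u); omega), if_neg (by show ¬ (u + k < u + k); omega)]
  have hv3 : ∀ j : Fin (u + k + 1), u ≤ (j : ℕ) → (j : ℕ) < u + k → v j = 3 := by
    intro j h1 h2; rw [hvdef]; dsimp only; rw [if_neg (by omega), if_pos h2]
  have hv2l : ∀ j : Fin (u + k + 1), (j : ℕ) < u → v j = 2 := by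
    intro j h1; rw [hvdef]; dsimp only; rw [if_pos h1]
  have hw0 : 0 < w := by omega
  set C : Fin (u + k + 1) → ℕ → Finset (Fin (if 1 ≤ k then 6 * w else 4 * w)) :=
    fun j a => rho A (pr j a wcol 0) with hCdef
  have memC : ∀ {r j a}, r ∈ C j a ↔ A r j = a ∧ A r wcol = 0 := by
    intro r j a; rw [hCdef]; exact mem_rho_pair
  have hNS : ∀ {j j' : Fin (u + k + 1)} {a b : ℕ}, j ≠ wcol → j' ≠ wcol →
      a < v j → b < v j' → ¬(j = j' ∧ a = b) → ¬ C j a ⊆ C j' b := by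
    intro j j' a b hj hj' ha hb hne
    refine no_sub hA hj hj' ha (hvw ▸ hw0) hb (hvw ▸ hw0) ?_
    intro heq
    have : ((j, a) : Fin (u + k + 1) × ℕ) ∈ pr j' b wcol 0 := heq ▸ mem_insert_self _ _
    rcases mem_insert.1 this with h | h
    · exact hne ⟨congrArg Prod.fst h, congrArg Prod.snd h⟩
    · exact hj (congrArg Prod.fst (mem_singleton.1 h))
  have hcov2 : ∀ {j : Fin (u + k + 1)}, j ≠ wcol →
      (if 1 ≤ k then 6 * w else 4 * w) = 2 * (v j * w) → ∀ a < v j, (C j a).card = 2 := by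
    intro j hj hN a ha
    rw [hCdef]
    exact cov_exact hA hn3 hv2 hj (by rw [hvw]; exact hN) ha (hvw ▸ hw0)
  set B : Finset (Fin (if 1 ≤ k then 6 * w else 4 * w)) :=
    univ.filter (fun r => A r wcol = 0) with hBdef
  have hCB : ∀ {j a}, C j a ⊆ B := by
    intro j a r hr
    rw [hBdef, mem_filter]
    exact ⟨mem_univ r, (memC.1 hr).2⟩
  have hBsum : ∀ j : Fin (u + k + 1), j ≠ wcol →
      B.card = ∑ a ∈ range (v j), (C j a).card := by
    intro j hj
    refine Finset.card_eq_sum_card_fiberwise (f := fun r => A r j) (t := range (v j))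
      (fun r _ => mem_range.2 (hA.1 r j)) |>.trans (Finset.sum_congr rfl ?_)
    intro a _
    congr 1
    ext r
    simp only [hBdef, mem_filter, mem_univ, true_and, memC]
    tauto
  have hcross : ∀ {g j : Fin (u + k + 1)} {a b : ℕ}, g ≠ wcol → j ≠ wcol → g ≠ j →
      (C g a).card = 2 → a < v g → b < v j → (C g a ∩ C j b).card ≤ 1 := by
    intro g j a b hgw hjw hgj hcard ha hb
    by_contra hcon
    push_neg at hcon
    obtain ⟨r, hr, s, hs, hrs⟩ := Finset.one_lt_card.1 hcon
    have hsub : ({r, s} : Finset _) ⊆ C g a :=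
      insert_subset (mem_of_mem_inter_left hr) (singleton_subset_iff.2 (mem_of_mem_inter_left hs))
    have hcard2 : ({r, s} : Finset _).card = 2 := by
      rw [card_insert_of_notMem (by simpa using hrs), card_singleton]
    have heq : ({r, s} : Finset _) = C g a :=
      eq_of_subset_of_card_le hsub (by omega)
    refine hNS hgw hjw ha hb (fun hh => hgj hh.1) ?_
    rw [← heq]
    intro x hx
    rcases mem_insert.1 hx with h | h
    · exact h ▸ mem_of_mem_inter_right hr
    · exact (mem_singleton.1 h) ▸ mem_of_mem_inter_right hs
  have hfibS : ∀ (S : Finset (Fin (if 1 ≤ k then 6 * w else 4 * w))), S ⊆ B →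
      ∀ g : Fin (u + k + 1), g ≠ wcol → S.card = ∑ a ∈ range (v g), (S ∩ C g a).card := by
    intro S hS g hg
    refine Finset.card_eq_sum_card_fiberwise (f := fun r => A r g) (t := range (v g))
      (fun r _ => mem_range.2 (hA.1 r g)) |>.trans (Finset.sum_congr rfl ?_)
    intro a _
    congr 1
    ext r
    simp only [mem_filter, mem_inter, memC]
    constructor
    · rintro ⟨hr, ha⟩
      exact ⟨hr, ha, (mem_filter.1 (hS hr)).2⟩
    · rintro ⟨hr, ha, _⟩
      exact ⟨hr, ha⟩
  have hsplit : ∀ (g j : Fin (u + k + 1)) (a : ℕ), g ≠ wcol → j ≠ wcol → g ≠ j →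
      v j = 2 → (C g a).card = 2 → a < v g →
      ∃ r s, (C g a ∩ C j 0) = {r} ∧ (C g a ∩ C j 1) = {s} ∧ C g a = {r, s} ∧ r ≠ s := by
    intro g j a hgw hjw hgj hvj hcard ha
    have h0 : (C g a ∩ C j 0).card ≤ 1 := hcross hgw hjw hgj hcard ha (by omega)
    have h1 : (C g a ∩ C j 1).card ≤ 1 := hcross hgw hjw hgj hcard ha (by omega)
    have hcover : ∀ x ∈ C g a, x ∈ C g a ∩ C j 0 ∨ x ∈ C g a ∩ C j 1 := by
      intro x hx
      have hxw : A x wcol = 0 := (memC.1 hx).2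
      have hxj : A x j < 2 := hvj ▸ hA.1 x j
      have : A x j = 0 ∨ A x j = 1 := by omega
      rcases this with hh | hh
      · exact Or.inl (mem_inter.2 ⟨hx, memC.2 ⟨hh, hxw⟩⟩)
      · exact Or.inr (mem_inter.2 ⟨hx, memC.2 ⟨hh, hxw⟩⟩)
    have hsub : C g a ⊆ (C g a ∩ C j 0) ∪ (C g a ∩ C j 1) := by
      intro x hx
      rcases hcover x hx with hh | hh
      · exact mem_union_left _ hh
      · exact mem_union_right _ hh
    have hge : 2 ≤ (C g a ∩ C j 0).card + (C g a ∩ C j 1).card := by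
      calc 2 = (C g a).card := hcard.symm
        _ ≤ ((C g a ∩ C j 0) ∪ (C g a ∩ C j 1)).card := card_le_card hsub
        _ ≤ _ := card_union_le _ _
    have hc0 : (C g a ∩ C j 0).card = 1 := by omega
    have hc1 : (C g a ∩ C j 1).card = 1 := by omega
    obtain ⟨r, hr⟩ := card_eq_one.1 hc0
    obtain ⟨s, hs⟩ := card_eq_one.1 hc1
    refine ⟨r, s, hr, hs, ?_, ?_⟩
    · apply Finset.Subset.antisymm
      · intro x hx
        rcases hcover x hx with hh | hh
        · rw [hr] at hh
          exact mem_insert.2 (Or.inl (mem_singleton.1 hh))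
        · rw [hs] at hh
          exact mem_insert.2 (Or.inr hh)
      · have hrm : r ∈ C g a := mem_of_mem_inter_left (hr ▸ mem_singleton_self r)
        have hsm : s ∈ C g a := mem_of_mem_inter_left (hs ▸ mem_singleton_self s)
        exact insert_subset hrm (singleton_subset_iff.2 hsm)
    · intro hrs
      have hr0 : A r j = 0 := (memC.1 (mem_of_mem_inter_right (hr ▸ mem_singleton_self r))).1
      have hs1 : A s j = 1 := (memC.1 (mem_of_mem_inter_right (hs ▸ mem_singleton_self s))).1
      rw [hrs, hs1] at hr0
      omega
  have h2lvl3 : ∀ (g j : Fin (u + k + 1)), g ≠ wcol → j ≠ wcol → g ≠ j →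
      v g = 3 → v j = 2 → (∀ a < 3, (C g a).card = 2) → B.card = 6 →
      ∀ b < 2, (C j b).card = 3 ∧ ∀ a < 3, (C j b ∩ C g a).card = 1 := by
    intro g j hgw hjw hgj hvg hvj hc2 hB6
    have hfib : ∀ b : ℕ, (C j b).card
        = (C j b ∩ C g 0).card + (C j b ∩ C g 1).card + (C j b ∩ C g 2).card := by
      intro b
      have := hfibS (C j b) hCB g hgw
      rw [hvg, Finset.sum_range_succ, Finset.sum_range_succ, Finset.sum_range_succ,
        Finset.sum_range_zero] at this
      omega
    have hle1 : ∀ (b a : ℕ), a < 3 → (C j b ∩ C g a).card ≤ 1 := by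
      intro b a ha
      rw [inter_comm]
      by_cases hb : b < 2
      · exact hcross hgw hjw hgj (hc2 a ha) (by omega) (by omega)
      · have : C j b = ∅ := by
          rw [eq_empty_iff_forall_notMem]
          intro x hx
          have := (memC.1 hx).1
          have := hA.1 x j
          omega
        simp [this]
    have hcards : ∀ b, b < 2 → (C j b).card ≤ 3 := by
      intro b hb
      rw [hfib b]
      have := hle1 b 0 (by omega)
      have := hle1 b 1 (by omega)
      have := hle1 b 2 (by omega)
      omega
    have hsum : (C j 0).card + (C j 1).card = 6 := by
      have := hBsum j hjw
      rw [hvj, Finset.sum_range_succ, Finset.sum_range_succ, Finset.sum_range_zero] at this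
      omega
    have h03 : (C j 0).card = 3 := by
      have := hcards 0 (by omega)
      have := hcards 1 (by omega)
      omega
    have h13 : (C j 1).card = 3 := by
      have := hcards 0 (by omega)
      omega
    intro b hb
    have hcb : (C j b).card = 3 := by
      interval_cases b
      · exact h03
      · exact h13
    refine ⟨hcb, ?_⟩
    have := hfib b
    have := hle1 b 0 (by omega)
    have := hle1 b 1 (by omega)
    have := hle1 b 2 (by omega)
    intro a ha
    interval_cases a <;> omega
  refine ⟨?_, ?_, ?_, ?_, ?_⟩
  · -- u < 2 ∨ k < 2
    by_contra hcon
    push_neg at hcon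
    obtain ⟨hu2, hk2⟩ := hcon
    have hNval : (if 1 ≤ k then 6 * w else 4 * w) = 6 * w := if_pos (by omega)
    set j0 : Fin (u + k + 1) := ⟨0, by omega⟩ with hj0def
    set j1 : Fin (u + k + 1) := ⟨1, by omega⟩ with hj1def
    set gg : Fin 2 → Fin (u + k + 1) := fun i => ⟨u + (i : ℕ), by omega⟩ with hggdef
    have hj0w : j0 ≠ wcol := by
      intro hh; have := congrArg Fin.val hh; simp only [hj0def, hwcol] at this; omega
    have hj1w : j1 ≠ wcol := by
      intro hh; have := congrArg Fin.val hh; simp only [hj1def, hwcol] at this; omega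
    have hggw : ∀ i, gg i ≠ wcol := by
      intro i hh; have := congrArg Fin.val hh; simp only [hggdef, hwcol] at this
      have := i.isLt; omega
    have hggj0 : ∀ i, gg i ≠ j0 := by
      intro i hh; have := congrArg Fin.val hh; simp only [hggdef, hj0def] at this; omega
    have hggj1 : ∀ i, gg i ≠ j1 := by
      intro i hh; have := congrArg Fin.val hh; simp only [hggdef, hj1def] at this; omega
    have hj01 : j0 ≠ j1 := by
      intro hh; have := congrArg Fin.val hh; simp only [hj0def, hj1def] at this; omega
    have hj0v : v j0 = 2 := hv2l _ (by show (0 : ℕ) < u; omega)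
    have hj1v : v j1 = 2 := hv2l _ (by show (1 : ℕ) < u; omega)
    have hgv : ∀ i, v (gg i) = 3 := by
      intro i
      refine hv3 _ (by show u ≤ u + (i : ℕ); omega) ?_
      show u + (i : ℕ) < u + k
      have := i.isLt; omega
    have hcard2 : ∀ i (a : ℕ), a < 3 → (C (gg i) a).card = 2 := by
      intro i a ha
      refine hcov2 (hggw i) ?_ a (by rw [hgv]; omega)
      rw [hgv, hNval]; ring
    have hB6 : B.card = 6 := by
      rw [hBsum (gg 0) (hggw 0), hgv]
      rw [Finset.sum_range_succ, Finset.sum_range_succ, Finset.sum_range_succ,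
        Finset.sum_range_zero, hcard2 0 0 (by omega), hcard2 0 1 (by omega),
        hcard2 0 2 (by omega)]
    have h23_0 := h2lvl3 (gg 0) j0 (hggw 0) hj0w (hggj0 0) (hgv 0) hj0v
      (fun a ha => hcard2 0 a ha) hB6
    have h23_1 := h2lvl3 (gg 0) j1 (hggw 0) hj1w (hggj1 0) (hgv 0) hj1v
      (fun a ha => hcard2 0 a ha) hB6
    -- quadrant counts
    have e1 : (C j0 0).card = (C j0 0 ∩ C j1 0).card + (C j0 0 ∩ C j1 1).card := by
      have := hfibS (C j0 0) hCB j1 hj1w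
      rw [hj1v, Finset.sum_range_succ, Finset.sum_range_succ, Finset.sum_range_zero] at this
      omega
    have e2 : (C j0 1).card = (C j0 1 ∩ C j1 0).card + (C j0 1 ∩ C j1 1).card := by
      have := hfibS (C j0 1) hCB j1 hj1w
      rw [hj1v, Finset.sum_range_succ, Finset.sum_range_succ, Finset.sum_range_zero] at this
      omega
    have e3 : (C j1 0).card = (C j0 0 ∩ C j1 0).card + (C j0 1 ∩ C j1 0).card := by
      have := hfibS (C j1 0) hCB j0 hj0w
      rw [hj0v, Finset.sum_range_succ, Finset.sum_range_succ, Finset.sum_range_zero,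
        inter_comm (C j1 0) (C j0 0), inter_comm (C j1 0) (C j0 1)] at this
      omega
    obtain ⟨T, hTdef⟩ : ∃ T : Finset (Finset (Fin (if 1 ≤ k then 6 * w else 4 * w))),
        T = ((C j0 0 ∩ C j1 0) ×ˢ (C j0 1 ∩ C j1 1)).image (fun p => ({p.1, p.2} : Finset _)) ∪
          ((C j0 0 ∩ C j1 1) ×ˢ (C j0 1 ∩ C j1 0)).image (fun p => ({p.1, p.2} : Finset _)) :=
      ⟨_, rfl⟩
    have hmem : ∀ p : Fin 2 × Fin 3, C (gg p.1) (p.2 : ℕ) ∈ T := by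
      intro p
      obtain ⟨r, s, hr0, hs0, heq, hrs⟩ := hsplit (gg p.1) j0 (p.2 : ℕ) (hggw p.1) hj0w
        (hggj0 p.1) hj0v (hcard2 p.1 p.2 p.2.isLt) (by rw [hgv]; exact p.2.isLt)
      obtain ⟨r', s', hr1, hs1, heq', hr's'⟩ := hsplit (gg p.1) j1 (p.2 : ℕ) (hggw p.1) hj1w
        (hggj1 p.1) hj1v (hcard2 p.1 p.2 p.2.isLt) (by rw [hgv]; exact p.2.isLt)
      have hrC0 : r ∈ C j0 0 := mem_of_mem_inter_right (hr0 ▸ mem_singleton_self r)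
      have hsC0 : s ∈ C j0 1 := mem_of_mem_inter_right (hs0 ▸ mem_singleton_self s)
      have hrS : r ∈ C (gg p.1) (p.2 : ℕ) := mem_of_mem_inter_left (hr0 ▸ mem_singleton_self r)
      have hsS : s ∈ C (gg p.1) (p.2 : ℕ) := mem_of_mem_inter_left (hs0 ▸ mem_singleton_self s)
      have hr'C1 : r' ∈ C j1 0 := mem_of_mem_inter_right (hr1 ▸ mem_singleton_self r')
      have hs'C1 : s' ∈ C j1 1 := mem_of_mem_inter_right (hs1 ▸ mem_singleton_self s')
      have hrcase : r = r' ∨ r = s' := by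
        have := heq' ▸ hrS
        rcases mem_insert.1 this with hh | hh
        · exact Or.inl hh
        · exact Or.inr (mem_singleton.1 hh)
      have hscase : s = r' ∨ s = s' := by
        have := heq' ▸ hsS
        rcases mem_insert.1 this with hh | hh
        · exact Or.inl hh
        · exact Or.inr (mem_singleton.1 hh)
      rw [hTdef, mem_union]
      rcases hrcase with hh | hh
      · have hsval : s = s' := by
          rcases hscase with h2 | h2
          · exact absurd (h2.trans hh.symm) hrs.symm
          · exact h2
        refine Or.inl (mem_image.2 ⟨(r, s), mem_product.2 ⟨?_, ?_⟩, heq.symm⟩)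
        · exact mem_inter.2 ⟨hrC0, hh ▸ hr'C1⟩
        · exact mem_inter.2 ⟨hsC0, hsval ▸ hs'C1⟩
      · have hsval : s = r' := by
          rcases hscase with h2 | h2
          · exact h2
          · exact absurd (h2.trans hh.symm) hrs.symm
        refine Or.inr (mem_image.2 ⟨(r, s), mem_product.2 ⟨?_, ?_⟩, heq.symm⟩)
        · exact mem_inter.2 ⟨hrC0, hh ▸ hs'C1⟩
        · exact mem_inter.2 ⟨hsC0, hsval ▸ hr'C1⟩
    have hle := classes_le (fun p : Fin 2 × Fin 3 => C (gg p.1) (p.2 : ℕ)) T hmem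
      (by
        intro p q heq
        by_contra hpq
        refine hNS (hggw p.1) (hggw q.1) (by rw [hgv]; exact p.2.isLt)
          (by rw [hgv]; exact q.2.isLt) ?_ heq.le
        rintro ⟨h1, h2⟩
        refine hpq (Prod.ext ?_ (Fin.ext h2))
        have := congrArg Fin.val h1
        simp only [hggdef] at this
        exact Fin.ext (by omega))
    simp only [Fintype.card_prod, Fintype.card_fin] at hle
    have hT1 : T.card ≤
        (C j0 0 ∩ C j1 0).card * (C j0 1 ∩ C j1 1).card +
        (C j0 0 ∩ C j1 1).card * (C j0 1 ∩ C j1 0).card := by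
      rw [hTdef]
      refine (card_union_le _ _).trans (Nat.add_le_add ?_ ?_)
      · exact card_image_le.trans (le_of_eq (card_product _ _))
      · exact card_image_le.trans (le_of_eq (card_product _ _))
    have key : ∀ x y z t : ℕ, x + y = 3 → z + t = 3 → x + z = 3 → 6 ≤ x * t + y * z →
        (x = 3 ∧ y = 0) ∨ (x = 0 ∧ y = 3) := by
      intro x y z t h1 h2 h3 h4
      have hzy : z = y := by omega
      have htx : t = x := by omega
      rw [hzy, htx] at h4
      have hx : x ≤ 3 := by omega
      have hy : y ≤ 3 := by omega
      interval_cases x <;> interval_cases y <;> omega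
    have hkey := key (C j0 0 ∩ C j1 0).card (C j0 0 ∩ C j1 1).card
      (C j0 1 ∩ C j1 0).card (C j0 1 ∩ C j1 1).card
      (by rw [← e1]; exact (h23_0 0 (by omega)).1)
      (by rw [← e2]; exact (h23_0 1 (by omega)).1)
      (by rw [← e3]; exact (h23_1 0 (by omega)).1)
      (by omega)
    have hcover0 : ∀ x ∈ C j0 0, x ∈ C j0 0 ∩ C j1 0 ∨ x ∈ C j0 0 ∩ C j1 1 := by
      intro x hx
      have hxw : A x wcol = 0 := (memC.1 hx).2
      have hxj : A x j1 < 2 := hj1v ▸ hA.1 x j1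
      have : A x j1 = 0 ∨ A x j1 = 1 := by omega
      rcases this with hh | hh
      · exact Or.inl (mem_inter.2 ⟨hx, memC.2 ⟨hh, hxw⟩⟩)
      · exact Or.inr (mem_inter.2 ⟨hx, memC.2 ⟨hh, hxw⟩⟩)
    rcases hkey with ⟨_, hd01⟩ | ⟨hd00, _⟩
    · have hempty : C j0 0 ∩ C j1 1 = ∅ := card_eq_zero.1 hd01
      refine hNS (a := 0) (b := 0) hj0w hj1w (by rw [hj0v]; omega) (by rw [hj1v]; omega)
        (fun hh => hj01 hh.1) ?_
      intro x hx
      rcases hcover0 x hx with hh | hh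
      · exact mem_of_mem_inter_right hh
      · exact absurd (hempty ▸ hh) (notMem_empty x)
    · have hempty : C j0 0 ∩ C j1 0 = ∅ := card_eq_zero.1 hd00
      refine hNS (a := 0) (b := 1) hj0w hj1w (by rw [hj0v]; omega) (by rw [hj1v]; omega)
        (fun hh => hj01 hh.1) ?_
      intro x hx
      rcases hcover0 x hx with hh | hh
      · exact absurd (hempty ▸ hh) (notMem_empty x)
      · exact mem_of_mem_inter_right hh
  · -- k = 0 → u ≤ 3
    intro hk0
    by_contra hu
    push_neg at hu
    subst hk0
    have hNval : (if 1 ≤ (0 : ℕ) then 6 * w else 4 * w) = 4 * w := if_neg (by omega)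
    set ji : Fin 4 → Fin (u + 0 + 1) := fun i => ⟨(i : ℕ), by omega⟩ with hjidef
    have hjiw : ∀ i, ji i ≠ wcol := by
      intro i hh
      have := congrArg Fin.val hh
      simp only [hjidef, hwcol] at this
      have := i.isLt; omega
    have hjv : ∀ i, v (ji i) = 2 := by
      intro i
      refine hv2l _ ?_
      show (i : ℕ) < u
      have := i.isLt; omega
    have hcard2 : ∀ i (a : ℕ), a < 2 → (C (ji i) a).card = 2 := by
      intro i a ha
      refine hcov2 (hjiw i) ?_ a (by rw [hjv]; omega)
      rw [hjv, hNval]; ring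
    have hB4 : B.card = 4 := by
      rw [hBsum (ji 0) (hjiw 0), hjv]
      rw [Finset.sum_range_succ, Finset.sum_range_succ, Finset.sum_range_zero,
        hcard2 0 0 (by omega), hcard2 0 1 (by omega)]
    have hle := classes_le (fun p : Fin 4 × Fin 2 => C (ji p.1) (p.2 : ℕ))
      (B.powersetCard 2)
      (fun p => mem_powersetCard.2 ⟨hCB, hcard2 p.1 p.2 p.2.isLt⟩)
      (by
        intro p q heq
        by_contra hpq
        refine hNS (hjiw p.1) (hjiw q.1) (by rw [hjv]; exact p.2.isLt)
          (by rw [hjv]; exact q.2.isLt) ?_ heq.le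
        rintro ⟨h1, h2⟩
        refine hpq (Prod.ext ?_ (Fin.ext h2))
        have := congrArg Fin.val h1
        simp only [hjidef] at this
        exact Fin.ext this)
    rw [card_powersetCard, hB4] at hle
    simp only [Fintype.card_prod, Fintype.card_fin] at hle
    norm_num [Nat.choose] at hle
  · -- k = 1 → u ≤ 4
    intro hk1
    by_contra hu
    push_neg at hu
    subst hk1
    have hNval : (if 1 ≤ (1 : ℕ) then 6 * w else 4 * w) = 6 * w := if_pos (by omega)
    set g : Fin (u + 1 + 1) := ⟨u, by omega⟩ with hgdef
    set ji : Fin 5 → Fin (u + 1 + 1) := fun i => ⟨(i : ℕ), by omega⟩ with hjidef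
    have hgw : g ≠ wcol := by
      intro hh; have := congrArg Fin.val hh; simp only [hgdef, hwcol] at this; omega
    have hjiw : ∀ i, ji i ≠ wcol := by
      intro i hh
      have := congrArg Fin.val hh
      simp only [hjidef, hwcol] at this
      have := i.isLt; omega
    have hgji : ∀ i, g ≠ ji i := by
      intro i hh
      have := congrArg Fin.val hh
      simp only [hgdef, hjidef] at this
      have := i.isLt; omega
    have hgv : v g = 3 := hv3 _ (by show u ≤ u; omega) (by show u < u + 1; omega)
    have hjv : ∀ i, v (ji i) = 2 := by
      intro i
      refine hv2l _ ?_
      show (i : ℕ) < u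
      have := i.isLt; omega
    have hcard2 : ∀ a < 3, (C g a).card = 2 := by
      intro a ha
      refine hcov2 hgw ?_ a (by rw [hgv]; omega)
      rw [hgv, hNval]; ring
    have hB6 : B.card = 6 := by
      rw [hBsum g hgw, hgv]
      rw [Finset.sum_range_succ, Finset.sum_range_succ, Finset.sum_range_succ,
        Finset.sum_range_zero, hcard2 0 (by omega), hcard2 1 (by omega),
        hcard2 2 (by omega)]
    set T : Finset (Finset (Fin (if 1 ≤ (1 : ℕ) then 6 * w else 4 * w))) :=
      ((C g 0 ×ˢ C g 1) ×ˢ C g 2).image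
        (fun p => ({p.1.1, p.1.2, p.2} : Finset _)) with hTdef
    have hmem : ∀ p : Fin 5 × Fin 2, C (ji p.1) (p.2 : ℕ) ∈ T := by
      intro p
      obtain ⟨hcb, hint⟩ := h2lvl3 g (ji p.1) hgw (hjiw p.1) (hgji p.1) hgv (hjv p.1)
        hcard2 hB6 (p.2 : ℕ) p.2.isLt
      obtain ⟨r0, h0⟩ := card_eq_one.1 (hint 0 (by omega))
      obtain ⟨r1, h1⟩ := card_eq_one.1 (hint 1 (by omega))
      obtain ⟨r2, h2⟩ := card_eq_one.1 (hint 2 (by omega))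
      have hm0 : r0 ∈ C g 0 := mem_of_mem_inter_right (h0 ▸ mem_singleton_self r0)
      have hm1 : r1 ∈ C g 1 := mem_of_mem_inter_right (h1 ▸ mem_singleton_self r1)
      have hm2 : r2 ∈ C g 2 := mem_of_mem_inter_right (h2 ▸ mem_singleton_self r2)
      have hS0 : r0 ∈ C (ji p.1) (p.2 : ℕ) := mem_of_mem_inter_left (h0 ▸ mem_singleton_self r0)
      have hS1 : r1 ∈ C (ji p.1) (p.2 : ℕ) := mem_of_mem_inter_left (h1 ▸ mem_singleton_self r1)
      have hS2 : r2 ∈ C (ji p.1) (p.2 : ℕ) := mem_of_mem_inter_left (h2 ▸ mem_singleton_self r2)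
      have heq : C (ji p.1) (p.2 : ℕ) = {r0, r1, r2} := by
        apply Finset.Subset.antisymm
        · intro x hx
          have hxw : A x wcol = 0 := (memC.1 hx).2
          have hxg : A x g < 3 := hgv ▸ hA.1 x g
          have hcases : A x g = 0 ∨ A x g = 1 ∨ A x g = 2 := by omega
          rcases hcases with hh | hh | hh
          · have : x ∈ C (ji p.1) (p.2 : ℕ) ∩ C g 0 := mem_inter.2 ⟨hx, memC.2 ⟨hh, hxw⟩⟩
            rw [h0, mem_singleton] at this
            exact this ▸ mem_insert_self _ _
          · have : x ∈ C (ji p.1) (p.2 : ℕ) ∩ C g 1 := mem_inter.2 ⟨hx, memC.2 ⟨hh, hxw⟩⟩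
            rw [h1, mem_singleton] at this
            rw [this]
            exact mem_insert.2 (Or.inr (mem_insert_self _ _))
          · have : x ∈ C (ji p.1) (p.2 : ℕ) ∩ C g 2 := mem_inter.2 ⟨hx, memC.2 ⟨hh, hxw⟩⟩
            rw [h2, mem_singleton] at this
            rw [this]
            exact mem_insert.2 (Or.inr (mem_insert.2 (Or.inr (mem_singleton_self _))))
        · exact insert_subset hS0 (insert_subset hS1 (singleton_subset_iff.2 hS2))
      rw [hTdef, mem_image]
      exact ⟨((r0, r1), r2),
        mem_product.2 ⟨mem_product.2 ⟨hm0, hm1⟩, hm2⟩, heq.symm⟩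
    have hle := classes_le (fun p : Fin 5 × Fin 2 => C (ji p.1) (p.2 : ℕ)) T hmem
      (by
        intro p q heq
        by_contra hpq
        refine hNS (hjiw p.1) (hjiw q.1) (by rw [hjv]; exact p.2.isLt)
          (by rw [hjv]; exact q.2.isLt) ?_ heq.le
        rintro ⟨h1, h2⟩
        refine hpq (Prod.ext ?_ (Fin.ext h2))
        have := congrArg Fin.val h1
        simp only [hjidef] at this
        exact Fin.ext this)
    have hTcard : T.card ≤ 8 := by
      refine card_image_le.trans ?_
      rw [card_product, card_product, hcard2 0 (by omega), hcard2 1 (by omega),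
        hcard2 2 (by omega)]
    simp only [Fintype.card_prod, Fintype.card_fin] at hle
    omega
  · -- u = 0 → k ≤ 5
    intro hu0
    by_contra hk
    push_neg at hk
    subst hu0
    have hk1 : 1 ≤ k := by omega
    have hNval : (if 1 ≤ k then 6 * w else 4 * w) = 6 * w := if_pos hk1
    set gi : Fin 6 → Fin (0 + k + 1) := fun i => ⟨(i : ℕ), by omega⟩ with hgidef
    have hgiw : ∀ i, gi i ≠ wcol := by
      intro i hh
      have := congrArg Fin.val hh
      simp only [hgidef, hwcol] at this
      omega
    have hgv : ∀ i, v (gi i) = 3 := by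
      intro i
      refine hv3 _ (by omega) ?_
      show (i : ℕ) < 0 + k
      omega
    have hcard2 : ∀ i (a : ℕ), a < 3 → (C (gi i) a).card = 2 := by
      intro i a ha
      refine hcov2 (hgiw i) ?_ a (by rw [hgv]; omega)
      rw [hgv, hNval]; ring
    have hB6 : B.card = 6 := by
      rw [hBsum (gi 0) (hgiw 0), hgv]
      rw [Finset.sum_range_succ, Finset.sum_range_succ, Finset.sum_range_succ,
        Finset.sum_range_zero, hcard2 0 0 (by omega), hcard2 0 1 (by omega),
        hcard2 0 2 (by omega)]
    have hle := classes_le (fun p : Fin 6 × Fin 3 => C (gi p.1) (p.2 : ℕ))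
      (B.powersetCard 2)
      (fun p => mem_powersetCard.2 ⟨hCB, hcard2 p.1 p.2 p.2.isLt⟩)
      (by
        intro p q heq
        by_contra hpq
        refine hNS (hgiw p.1) (hgiw q.1) (by rw [hgv]; exact p.2.isLt)
          (by rw [hgv]; exact q.2.isLt) ?_ heq.le
        rintro ⟨h1, h2⟩
        refine hpq (Prod.ext ?_ (Fin.ext h2))
        have := congrArg Fin.val h1
        simp only [hgidef] at this
        exact Fin.ext this)
    rw [card_powersetCard, hB6] at hle
    simp only [Fintype.card_prod, Fintype.card_fin] at hle
    norm_num [Nat.choose] at hle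
  · -- u = 1 → k ≤ 3
    intro hu1
    by_contra hk
    push_neg at hk
    subst hu1
    have hNval : (if 1 ≤ k then 6 * w else 4 * w) = 6 * w := if_pos (by omega)
    set j0 : Fin (1 + k + 1) := ⟨0, by omega⟩ with hj0def
    set gi : Fin 4 → Fin (1 + k + 1) := fun i => ⟨1 + (i : ℕ), by omega⟩ with hgidef
    have hj0w : j0 ≠ wcol := by
      intro hh; have := congrArg Fin.val hh; simp only [hj0def, hwcol] at this; omega
    have hgiw : ∀ i, gi i ≠ wcol := by
      intro i hh
      have := congrArg Fin.val hh
      simp only [hgidef, hwcol] at this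
      have := i.isLt; omega
    have hgij0 : ∀ i, gi i ≠ j0 := by
      intro i hh
      have := congrArg Fin.val hh
      simp only [hgidef, hj0def] at this
      omega
    have hj0v : v j0 = 2 := hv2l _ (by show (0 : ℕ) < 1; omega)
    have hgv : ∀ i, v (gi i) = 3 := by
      intro i
      refine hv3 _ (by show 1 ≤ 1 + (i : ℕ); omega) ?_
      show 1 + (i : ℕ) < 1 + k
      have := i.isLt; omega
    have hcard2 : ∀ i (a : ℕ), a < 3 → (C (gi i) a).card = 2 := by
      intro i a ha
      refine hcov2 (hgiw i) ?_ a (by rw [hgv]; omega)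
      rw [hgv, hNval]; ring
    have hB6 : B.card = 6 := by
      rw [hBsum (gi 0) (hgiw 0), hgv]
      rw [Finset.sum_range_succ, Finset.sum_range_succ, Finset.sum_range_succ,
        Finset.sum_range_zero, hcard2 0 0 (by omega), hcard2 0 1 (by omega),
        hcard2 0 2 (by omega)]
    set T : Finset (Finset (Fin (if 1 ≤ k then 6 * w else 4 * w))) :=
      (C j0 0 ×ˢ C j0 1).image (fun p => ({p.1, p.2} : Finset _)) with hTdef
    have hmem : ∀ p : Fin 4 × Fin 3, C (gi p.1) (p.2 : ℕ) ∈ T := by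
      intro p
      obtain ⟨r, s, hr, hs, heq, hrs⟩ := hsplit (gi p.1) j0 (p.2 : ℕ) (hgiw p.1) hj0w
        (hgij0 p.1) hj0v (hcard2 p.1 p.2 p.2.isLt) (by rw [hgv]; exact p.2.isLt)
      rw [hTdef, mem_image]
      exact ⟨(r, s), mem_product.2
        ⟨mem_of_mem_inter_right (hr ▸ mem_singleton_self r),
         mem_of_mem_inter_right (hs ▸ mem_singleton_self s)⟩, heq.symm⟩
    have hle := classes_le (fun p : Fin 4 × Fin 3 => C (gi p.1) (p.2 : ℕ)) T hmem
      (by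
        intro p q heq
        by_contra hpq
        refine hNS (hgiw p.1) (hgiw q.1) (by rw [hgv]; exact p.2.isLt)
          (by rw [hgv]; exact q.2.isLt) ?_ heq.le
        rintro ⟨h1, h2⟩
        refine hpq (Prod.ext ?_ (Fin.ext h2))
        have := congrArg Fin.val h1
        simp only [hgidef] at this
        exact Fin.ext (by omega))
    have hTcard : T.card ≤ (C j0 0).card * (C j0 1).card :=
      card_image_le.trans (le_of_eq (card_product _ _))
    have hsum : (C j0 0).card + (C j0 1).card = 6 := by
      have := hBsum j0 hj0w
      rw [hj0v, Finset.sum_range_succ, Finset.sum_range_succ, Finset.sum_range_zero] at this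
      omega
    have key : ∀ m m' : ℕ, m + m' = 6 → m * m' ≤ 9 := by
      intro m m' hmm
      have : m ≤ 6 := by omega
      interval_cases m <;> omega
    have := key _ _ hsum
    simp only [Fintype.card_prod, Fintype.card_fin] at hle
    omega
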